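/- For every t ≥ 1, all policy profiles π, π' ∈ Π, and all probability distributions w, w' on S, ‖(w − w')(P_π^t − P_{π'}^t)‖₁ ≤ (2^n − 1)|A||S| · t e^{−(t−1)/τ} · ‖π − π'‖_∞ · ‖w − w'‖₁. -/

import Mathlib

open Matrix BigOperators

noncomputable section

variable {n : ℕ} {S : Type} [Fintype S] [DecidableEq S]
  {A : Fin n → Type} [∀ i, Fintype (A i)] [∀ i, DecidableEq (A i)]

/-- A stationary policy profile: each player `i` assigns to each state a
probability distribution on her action set `A i`. -/
def IsPolicyProfile (π : ∀ i : Fin n, S → A i → ℝ) : Prop :=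
  (∀ i s a, 0 ≤ π i s a) ∧ (∀ i s, ∑ a, π i s a = 1)

/-- Transition probabilities `ℙ[s' | s, a]`. -/
def IsTransition (T : S → (∀ i, A i) → S → ℝ) : Prop :=
  (∀ s a s', 0 ≤ T s a s') ∧ (∀ s a, ∑ s', T s a s' = 1)

/-- A probability distribution on `S` (as a row vector). -/
def IsDist (w : S → ℝ) : Prop := (∀ s, 0 ≤ w s) ∧ ∑ s, w s = 1

/-- The transition matrix induced by a policy profile:
`P_π(s'|s) = ∑_a ℙ[s'|s,a] ∏_j π_j(a_j|s)`. -/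
def Pmat (T : S → (∀ i, A i) → S → ℝ) (π : ∀ i : Fin n, S → A i → ℝ) :
    Matrix S S ℝ :=
  fun s s' => ∑ a : ∀ i, A i, T s a s' * ∏ i, π i s (a i)

/-- Sup-norm distance between two policy profiles. -/
def polDist (π π' : ∀ i : Fin n, S → A i → ℝ) : ℝ :=
  ⨆ i, ⨆ s, ⨆ a, |π i s a - π' i s a|

/-- ℓ¹-norm on ℝ^S. -/
def l1 (w : S → ℝ) : ℝ := ∑ s, |w s|

/-- The expected one-step reward vector `R_i^π`. -/
def Rvec (r : S → (∀ i, A i) → ℝ) (π : ∀ i : Fin n, S → A i → ℝ) : S → ℝ :=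
  fun s => ∑ a : ∀ i, A i, (∏ j, π j s (a j)) * r s a

/-- The long-run average value `V_i(π) = ∑_s p_π(s) R_i^π(s)`, where `p` is the
stationary distribution of `P_π`. -/
def Vval (p : S → ℝ) (R : S → ℝ) : ℝ := ∑ s, p s * R s

/-- The uniform mixing assumption with mixing time `τ`. -/
def Mixing (T : S → (∀ i, A i) → S → ℝ) (τ : ℝ) : Prop :=
  ∀ π : ∀ i : Fin n, S → A i → ℝ, IsPolicyProfile π →
    ∀ w w' : S → ℝ, IsDist w → IsDist w' →
      l1 ((w - w') ᵥ* Pmat T π) ≤ Real.exp (-(1 / τ)) * l1 (w - w')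

/-- The advantage function
`adv^π_i(s,a) = r_i(s,a) − V_i(π) + ∑_{t≥1} ((e_s − p_π) P_π^t) R_i^π`. -/
def adv (T : S → (∀ i, A i) → S → ℝ) (r : S → (∀ i, A i) → ℝ)
    (π : ∀ i : Fin n, S → A i → ℝ) (p : S → ℝ) (s : S) (a : ∀ i, A i) : ℝ :=
  r s a - Vval p (Rvec r π)
    + ∑' t : ℕ, ((Pi.single s 1 - p) ᵥ* (Pmat T π ^ (t + 1))) ⬝ᵥ (Rvec r π)

/-- The average advantage function
`\bar adv^π_i(s, a_i) = ∑_{a_{-i}} (∏_{j≠i} π_j(a_j|s)) adv^π_i(s,(a_i,a_{-i}))`. -/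
def avgAdv (T : S → (∀ i, A i) → S → ℝ) (r : S → (∀ i, A i) → ℝ)
    (π : ∀ i : Fin n, S → A i → ℝ) (p : S → ℝ) (i : Fin n) (s : S) (ai : A i) : ℝ :=
  ∑ a : ∀ j, A j,
    if a i = ai then (∏ j ∈ Finset.univ.erase i, π j s (a j)) * adv T r π p s a
    else 0


/-! ### Auxiliary lemmas -/

set_option linter.unusedSectionVars false
set_option linter.unusedVariables false

lemma my_bdd {ι : Sort*} (f : ι → ℝ) (h : ∀ i, f i ≤ 1) : BddAbove (Set.range f) :=
  ⟨1, by rintro x ⟨i, rfl⟩; exact h i⟩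

lemma my_l1_nonneg (v : S → ℝ) : 0 ≤ l1 v :=
  Finset.sum_nonneg fun _ _ => abs_nonneg _

lemma my_l1_add_le (u v : S → ℝ) : l1 (u + v) ≤ l1 u + l1 v := by
  rw [l1, l1, l1, ← Finset.sum_add_distrib]
  exact Finset.sum_le_sum fun s _ => abs_add_le _ _

lemma my_l1_smul (c : ℝ) (v : S → ℝ) : l1 (c • v) = |c| * l1 v := by
  simp [l1, abs_mul, Finset.mul_sum]

lemma my_vecMul_apply (v : S → ℝ) (M : Matrix S S ℝ) (s' : S) :
    (v ᵥ* M) s' = ∑ s, v s * M s s' := by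
  simp [Matrix.vecMul, dotProduct]

lemma my_sum_vecMul (v : S → ℝ) (M : Matrix S S ℝ) :
    ∑ s', (v ᵥ* M) s' = ∑ s, v s * ∑ s', M s s' := by
  simp only [my_vecMul_apply, Finset.mul_sum]
  exact Finset.sum_comm

/-- entries of a policy profile lie in `[0,1]`. -/
lemma my_pol_le_one {π : ∀ i : Fin n, S → A i → ℝ} (hπ : IsPolicyProfile π)
    (i : Fin n) (s : S) (a : A i) : π i s a ≤ 1 := by
  have := Finset.single_le_sum (f := π i s) (fun b _ => hπ.1 i s b) (Finset.mem_univ a)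
  rwa [hπ.2 i s] at this

lemma my_T_le_one {T : S → (∀ i, A i) → S → ℝ} (hT : IsTransition T)
    (s : S) (a : ∀ i, A i) (s' : S) : T s a s' ≤ 1 := by
  have := Finset.single_le_sum (f := T s a) (fun b _ => hT.1 s a b) (Finset.mem_univ s')
  rwa [hT.2 s a] at this

lemma my_polDist_nonneg (π π' : ∀ i : Fin n, S → A i → ℝ) : 0 ≤ polDist π π' := by
  refine Real.iSup_nonneg fun i => Real.iSup_nonneg fun s => Real.iSup_nonneg fun a => abs_nonneg _

lemma my_le_polDist {π π' : ∀ i : Fin n, S → A i → ℝ}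
    (hπ : IsPolicyProfile π) (hπ' : IsPolicyProfile π')
    (i : Fin n) (s : S) (a : A i) : |π i s a - π' i s a| ≤ polDist π π' := by
  have hb : ∀ (j : Fin n) (u : S) (b : A j), |π j u b - π' j u b| ≤ 1 := by
    intro j u b
    rw [abs_sub_le_iff]
    constructor <;> nlinarith [hπ.1 j u b, hπ'.1 j u b, my_pol_le_one hπ j u b,
      my_pol_le_one hπ' j u b]
  have h1 : |π i s a - π' i s a| ≤ ⨆ b, |π i s b - π' i s b| :=
    le_ciSup (my_bdd _ (fun b => hb i s b)) a
  have h2 : (⨆ b, |π i s b - π' i s b|) ≤ ⨆ u, ⨆ b, |π i u b - π' i u b| :=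
    le_ciSup (f := fun u => ⨆ b, |π i u b - π' i u b|)
      (my_bdd _ (fun u => Real.iSup_le (fun b => hb i u b) zero_le_one)) s
  have h3 : (⨆ u, ⨆ b, |π i u b - π' i u b|) ≤ polDist π π' :=
    le_ciSup (f := fun j => ⨆ u, ⨆ b : A j, |π j u b - π' j u b|)
      (my_bdd _ (fun j => Real.iSup_le
        (fun u => Real.iSup_le (fun b => hb j u b) zero_le_one) zero_le_one)) i
  exact h1.trans (h2.trans h3)

lemma my_prod_sub_prod {ι : Type*} (s : Finset ι) (f g : ι → ℝ)
    (hf : ∀ i ∈ s, 0 ≤ f i ∧ f i ≤ 1) (hg : ∀ i ∈ s, 0 ≤ g i ∧ g i ≤ 1) :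
    |∏ i ∈ s, f i - ∏ i ∈ s, g i| ≤ ∑ i ∈ s, |f i - g i| := by
  induction s using Finset.cons_induction with
  | empty => simp
  | cons a s ha ih =>
    rw [Finset.prod_cons, Finset.prod_cons, Finset.sum_cons]
    have hfa := hf a (Finset.mem_cons_self a s)
    have hga := hg a (Finset.mem_cons_self a s)
    have hgs : |∏ i ∈ s, g i| ≤ 1 := by
      rw [abs_of_nonneg (Finset.prod_nonneg fun i hi => (hg i (Finset.mem_cons_of_mem hi)).1)]
      exact Finset.prod_le_one (fun i hi => (hg i (Finset.mem_cons_of_mem hi)).1)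
        (fun i hi => (hg i (Finset.mem_cons_of_mem hi)).2)
    have hrec := ih (fun i hi => hf i (Finset.mem_cons_of_mem hi))
        (fun i hi => hg i (Finset.mem_cons_of_mem hi))
    calc |f a * ∏ i ∈ s, f i - g a * ∏ i ∈ s, g i|
        = |f a * (∏ i ∈ s, f i - ∏ i ∈ s, g i) + (f a - g a) * ∏ i ∈ s, g i| := by ring_nf
      _ ≤ |f a * (∏ i ∈ s, f i - ∏ i ∈ s, g i)| + |(f a - g a) * ∏ i ∈ s, g i| := abs_add_le _ _
      _ ≤ |f a - g a| + ∑ i ∈ s, |f i - g i| := by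
          rw [abs_mul, abs_mul]
          have h1 : |f a| * |∏ i ∈ s, f i - ∏ i ∈ s, g i| ≤ ∑ i ∈ s, |f i - g i| := by
            have : |f a| ≤ 1 := by rw [abs_of_nonneg hfa.1]; exact hfa.2
            nlinarith [abs_nonneg (∏ i ∈ s, f i - ∏ i ∈ s, g i),
              Finset.sum_nonneg (s := s) (f := fun i => |f i - g i|) fun i _ => abs_nonneg _]
          have h2 : |f a - g a| * |∏ i ∈ s, g i| ≤ |f a - g a| :=
            mul_le_of_le_one_right (abs_nonneg _) hgs
          linarith
      _ = |f a - g a| + ∑ i ∈ s, |f i - g i| := rfl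

/-- entrywise bound on the difference of induced transition matrices. -/
lemma my_entry_bound {T : S → (∀ i, A i) → S → ℝ} (hT : IsTransition T)
    {π π' : ∀ i : Fin n, S → A i → ℝ}
    (hπ : IsPolicyProfile π) (hπ' : IsPolicyProfile π') (s s' : S) :
    |Pmat T π s s' - Pmat T π' s s'| ≤
      (Fintype.card (∀ i, A i) : ℝ) * ((n : ℝ) * polDist π π') := by
  have key : ∀ a : ∀ i, A i,
      |T s a s' * ∏ i, π i s (a i) - T s a s' * ∏ i, π' i s (a i)| ≤
        (n : ℝ) * polDist π π' := by
    intro a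
    rw [← mul_sub, abs_mul, abs_of_nonneg (hT.1 s a s')]
    have h1 : |∏ i, π i s (a i) - ∏ i, π' i s (a i)| ≤ ∑ i, |π i s (a i) - π' i s (a i)| :=
      my_prod_sub_prod Finset.univ _ _
        (fun i _ => ⟨hπ.1 i s (a i), my_pol_le_one hπ i s (a i)⟩)
        (fun i _ => ⟨hπ'.1 i s (a i), my_pol_le_one hπ' i s (a i)⟩)
    have h2 : (∑ i, |π i s (a i) - π' i s (a i)|) ≤ (n : ℝ) * polDist π π' := by
      calc (∑ i, |π i s (a i) - π' i s (a i)|) ≤ ∑ _i : Fin n, polDist π π' :=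
            Finset.sum_le_sum fun i _ => my_le_polDist hπ hπ' i s (a i)
        _ = (n : ℝ) * polDist π π' := by simp [Finset.sum_const, mul_comm]
    calc T s a s' * |∏ i, π i s (a i) - ∏ i, π' i s (a i)|
        ≤ 1 * |∏ i, π i s (a i) - ∏ i, π' i s (a i)| :=
          mul_le_mul_of_nonneg_right (my_T_le_one hT s a s') (abs_nonneg _)
      _ = |∏ i, π i s (a i) - ∏ i, π' i s (a i)| := one_mul _
      _ ≤ (n : ℝ) * polDist π π' := h1.trans h2
  calc |Pmat T π s s' - Pmat T π' s s'|
      = |∑ a : ∀ i, A i, (T s a s' * ∏ i, π i s (a i) - T s a s' * ∏ i, π' i s (a i))| := by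
        rw [Pmat, Pmat, ← Finset.sum_sub_distrib]
    _ ≤ ∑ a : ∀ i, A i, |T s a s' * ∏ i, π i s (a i) - T s a s' * ∏ i, π' i s (a i)| :=
        Finset.abs_sum_le_sum_abs _ _
    _ ≤ ∑ _a : ∀ i, A i, (n : ℝ) * polDist π π' := Finset.sum_le_sum fun a _ => key a
    _ = (Fintype.card (∀ i, A i) : ℝ) * ((n : ℝ) * polDist π π') := by
        simp [Finset.sum_const, Finset.card_univ]

lemma my_l1_vecMul_le (M : Matrix S S ℝ) (v : S → ℝ) (C : ℝ) (hC0 : 0 ≤ C)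
    (hC : ∀ s s', |M s s'| ≤ C) :
    l1 (v ᵥ* M) ≤ (Fintype.card S : ℝ) * C * l1 v := by
  have h1 : ∀ s', |(v ᵥ* M) s'| ≤ ∑ s, |v s| * C := by
    intro s'
    rw [my_vecMul_apply]
    refine (Finset.abs_sum_le_sum_abs _ _).trans (Finset.sum_le_sum fun s _ => ?_)
    rw [abs_mul]
    exact mul_le_mul_of_nonneg_left (hC s s') (abs_nonneg _)
  calc l1 (v ᵥ* M) ≤ ∑ _s' : S, ∑ s, |v s| * C := Finset.sum_le_sum fun s' _ => h1 s'
    _ = (Fintype.card S : ℝ) * ((∑ s, |v s|) * C) := by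
        rw [Finset.sum_const, Finset.card_univ, nsmul_eq_mul, ← Finset.sum_mul]
    _ = (Fintype.card S : ℝ) * C * l1 v := by rw [l1]; ring

lemma my_pmat_rowsum {T : S → (∀ i, A i) → S → ℝ} (hT : IsTransition T)
    {π : ∀ i : Fin n, S → A i → ℝ} (hπ : IsPolicyProfile π) (s : S) :
    ∑ s', Pmat T π s s' = 1 := by
  rw [show (∑ s', Pmat T π s s') = ∑ a : ∀ i, A i, (∑ s', T s a s') * ∏ i, π i s (a i) by
    simp only [Pmat]; rw [Finset.sum_comm]; simp [Finset.sum_mul]]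
  have : ∀ a : ∀ i, A i, (∑ s', T s a s') * ∏ i, π i s (a i) = ∏ i, π i s (a i) := by
    intro a; rw [hT.2 s a, one_mul]
  rw [Finset.sum_congr rfl fun a _ => this a]
  have := (Finset.prod_univ_sum (fun _ : Fin n => (Finset.univ : Finset _))
    (fun i (a : A i) => π i s a)).symm
  rw [Fintype.piFinset_univ] at this
  rw [this]
  simp [hπ.2]

lemma my_sum_vecMul_zero {T : S → (∀ i, A i) → S → ℝ} (hT : IsTransition T)
    {π : ∀ i : Fin n, S → A i → ℝ} (hπ : IsPolicyProfile π)
    {v : S → ℝ} (hv : ∑ s, v s = 0) : ∑ s', (v ᵥ* Pmat T π) s' = 0 := by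
  rw [my_sum_vecMul]
  calc ∑ s, v s * ∑ s', Pmat T π s s' = ∑ s, v s := by
        refine Finset.sum_congr rfl fun s _ => ?_
        rw [my_pmat_rowsum hT hπ, mul_one]
    _ = 0 := hv

/-- one-step contraction for mean-zero vectors. -/
lemma my_contraction {T : S → (∀ i, A i) → S → ℝ} {τ : ℝ} (hmix : Mixing T τ)
    {π : ∀ i : Fin n, S → A i → ℝ} (hπ : IsPolicyProfile π)
    (v : S → ℝ) (hv : ∑ s, v s = 0) :
    l1 (v ᵥ* Pmat T π) ≤ Real.exp (-(1 / τ)) * l1 v := by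
  set vp : S → ℝ := fun s => max (v s) 0 with hvp
  set vm : S → ℝ := fun s => max (-v s) 0 with hvm
  have hsub : ∀ s, vp s - vm s = v s := fun s => max_zero_sub_max_neg_zero_eq_self (v s)
  have hvpn : ∀ s, 0 ≤ vp s := fun s => le_max_right _ _
  have hvmn : ∀ s, 0 ≤ vm s := fun s => le_max_right _ _
  set m : ℝ := ∑ s, vp s with hm
  have hmn : 0 ≤ m := Finset.sum_nonneg fun s _ => hvpn s
  have hmm : ∑ s, vm s = m := by
    have : ∑ s, (vp s - vm s) = 0 := by
      rw [Finset.sum_congr rfl fun s _ => hsub s]; exact hv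
    rw [Finset.sum_sub_distrib] at this
    linarith
  rcases eq_or_lt_of_le hmn with hm0 | hmpos
  · -- m = 0, so v = 0
    have hvp0 : ∀ s, vp s = 0 := by
      intro s
      have := (Finset.sum_eq_zero_iff_of_nonneg (fun s _ => hvpn s)).mp hm0.symm
      exact this s (Finset.mem_univ s)
    have hvm0 : ∀ s, vm s = 0 := by
      intro s
      have := (Finset.sum_eq_zero_iff_of_nonneg (fun s _ => hvmn s)).mp (by rw [hmm]; exact hm0.symm)
      exact this s (Finset.mem_univ s)
    have hv0 : v = 0 := funext fun s => by have := hsub s; rw [hvp0 s, hvm0 s] at this; simpa using this.symm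
    rw [hv0]
    simp [l1, Matrix.zero_vecMul]
  · -- m > 0
    set w : S → ℝ := m⁻¹ • vp with hw
    set w' : S → ℝ := m⁻¹ • vm with hw'
    have hinv : 0 ≤ m⁻¹ := inv_nonneg.mpr hmn
    have hwD : IsDist w := by
      constructor
      · intro s; exact mul_nonneg hinv (hvpn s)
      · simp only [hw, Pi.smul_apply, smul_eq_mul, ← Finset.mul_sum, ← hm]
        field_simp
    have hw'D : IsDist w' := by
      constructor
      · intro s; exact mul_nonneg hinv (hvmn s)
      · simp only [hw', Pi.smul_apply, smul_eq_mul, ← Finset.mul_sum, hmm]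
        field_simp
    have hveq : v = m • (w - w') := by
      funext s
      simp only [Pi.smul_apply, Pi.sub_apply, hw, hw', smul_eq_mul]
      rw [← hsub s]
      field_simp
    have hmain := hmix π hπ w w' hwD hw'D
    rw [hveq, Matrix.smul_vecMul, my_l1_smul, my_l1_smul, abs_of_nonneg hmn]
    calc m * l1 ((w - w') ᵥ* Pmat T π) ≤ m * (Real.exp (-(1 / τ)) * l1 (w - w')) :=
          mul_le_mul_of_nonneg_left hmain hmn
      _ = Real.exp (-(1 / τ)) * (m * l1 (w - w')) := by ring

/-- mean-zero vectors keep zero sum under powers. -/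
lemma my_sum_vecMul_pow_zero {T : S → (∀ i, A i) → S → ℝ} (hT : IsTransition T)
    {π : ∀ i : Fin n, S → A i → ℝ} (hπ : IsPolicyProfile π)
    {v : S → ℝ} (hv : ∑ s, v s = 0) (k : ℕ) : ∑ s', (v ᵥ* Pmat T π ^ k) s' = 0 := by
  induction k with
  | zero => simpa [Matrix.vecMul_one] using hv
  | succ k ih =>
    rw [pow_succ, ← Matrix.vecMul_vecMul]
    exact my_sum_vecMul_zero hT hπ ih

/-- k-step contraction for mean-zero vectors. -/
lemma my_pow_contraction {T : S → (∀ i, A i) → S → ℝ} (hT : IsTransition T)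
    {τ : ℝ} (hτ : 0 < τ) (hmix : Mixing T τ)
    {π : ∀ i : Fin n, S → A i → ℝ} (hπ : IsPolicyProfile π)
    (v : S → ℝ) (hv : ∑ s, v s = 0) (k : ℕ) :
    l1 (v ᵥ* Pmat T π ^ k) ≤ Real.exp (-(k : ℝ) / τ) * l1 v := by
  induction k with
  | zero => simp [Matrix.vecMul_one]
  | succ k ih =>
    rw [pow_succ, ← Matrix.vecMul_vecMul]
    calc l1 ((v ᵥ* Pmat T π ^ k) ᵥ* Pmat T π)
        ≤ Real.exp (-(1 / τ)) * l1 (v ᵥ* Pmat T π ^ k) :=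
          my_contraction hmix hπ _ (my_sum_vecMul_pow_zero hT hπ hv k)
      _ ≤ Real.exp (-(1 / τ)) * (Real.exp (-(k : ℝ) / τ) * l1 v) :=
          mul_le_mul_of_nonneg_left ih (Real.exp_pos _).le
      _ = Real.exp (-((k : ℕ) + 1 : ℝ) / τ) * l1 v := by
          rw [← mul_assoc, ← Real.exp_add]
          congr 1
          field_simp
          congr 1; ring
      _ = Real.exp (-((k + 1 : ℕ) : ℝ) / τ) * l1 v := by push_cast; ring_nf

/-- the main induction. -/
lemma my_key {T : S → (∀ i, A i) → S → ℝ} (hT : IsTransition T)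
    {τ : ℝ} (hτ : 0 < τ) (hmix : Mixing T τ)
    {π π' : ∀ i : Fin n, S → A i → ℝ}
    (hπ : IsPolicyProfile π) (hπ' : IsPolicyProfile π')
    (v : S → ℝ) (hv : ∑ s, v s = 0) (t : ℕ) :
    l1 (v ᵥ* (Pmat T π ^ t - Pmat T π' ^ t)) ≤
      (t : ℝ) * (((2 : ℝ) ^ n - 1) * (Fintype.card (∀ i, A i) : ℝ) * (Fintype.card S : ℝ) *
        polDist π π') * Real.exp (-((t : ℝ) - 1) / τ) * l1 v := by
  set Δ : ℝ := polDist π π' with hΔ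
  have hΔ0 : 0 ≤ Δ := my_polDist_nonneg π π'
  set D : ℝ := ((2 : ℝ) ^ n - 1) * (Fintype.card (∀ i, A i) : ℝ) * (Fintype.card S : ℝ) * Δ
    with hD
  have hD0 : 0 ≤ D := by
    have h2 : (1 : ℝ) ≤ 2 ^ n := one_le_pow₀ (by norm_num)
    have : (0:ℝ) ≤ (2:ℝ)^n - 1 := by linarith
    positivity
  have hstep : ∀ u : S → ℝ,
      l1 (u ᵥ* (Pmat T π - Pmat T π')) ≤ D * l1 u := by
    intro u
    have hC0 : 0 ≤ (Fintype.card (∀ i, A i) : ℝ) * ((n : ℝ) * Δ) := by positivity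
    have h := my_l1_vecMul_le (Pmat T π - Pmat T π') u _ hC0
      (fun s s' => by simpa using my_entry_bound hT hπ hπ' s s')
    refine h.trans ?_
    have hn2 : (n : ℝ) ≤ (2:ℝ) ^ n - 1 := by
      have h0 : n + 1 ≤ 2 ^ n := Nat.lt_two_pow_self
      have : (n : ℝ) + 1 ≤ (2:ℝ) ^ n := by exact_mod_cast h0
      linarith
    have hcS : (0:ℝ) ≤ (Fintype.card S : ℝ) := Nat.cast_nonneg _
    have hcA : (0:ℝ) ≤ (Fintype.card (∀ i, A i) : ℝ) := Nat.cast_nonneg _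
    have hmul : (n : ℝ) * Δ ≤ ((2:ℝ) ^ n - 1) * Δ := mul_le_mul_of_nonneg_right hn2 hΔ0
    have hmain : (Fintype.card S : ℝ) * ((Fintype.card (∀ i, A i) : ℝ) * ((n : ℝ) * Δ)) ≤ D := by
      calc (Fintype.card S : ℝ) * ((Fintype.card (∀ i, A i) : ℝ) * ((n : ℝ) * Δ))
          ≤ (Fintype.card S : ℝ) * ((Fintype.card (∀ i, A i) : ℝ) * (((2:ℝ) ^ n - 1) * Δ)) :=
            mul_le_mul_of_nonneg_left (mul_le_mul_of_nonneg_left hmul hcA) hcS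
        _ = D := by rw [hD]; ring
    exact mul_le_mul_of_nonneg_right hmain (my_l1_nonneg u)
  induction t with
  | zero => simp [l1, Matrix.zero_vecMul]
  | succ t ih =>
    have hid : Pmat T π ^ (t + 1) - Pmat T π' ^ (t + 1) =
        Pmat T π ^ t * (Pmat T π - Pmat T π') + (Pmat T π ^ t - Pmat T π' ^ t) * Pmat T π' := by
      rw [pow_succ, pow_succ]
      noncomm_ring
    rw [hid, Matrix.vecMul_add, ← Matrix.vecMul_vecMul, ← Matrix.vecMul_vecMul]
    have term1 : l1 ((v ᵥ* Pmat T π ^ t) ᵥ* (Pmat T π - Pmat T π')) ≤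
        D * (Real.exp (-(t : ℝ) / τ) * l1 v) := by
      refine (hstep _).trans ?_
      exact mul_le_mul_of_nonneg_left (my_pow_contraction hT hτ hmix hπ v hv t) hD0
    have hsumdiff : ∑ s', (v ᵥ* (Pmat T π ^ t - Pmat T π' ^ t)) s' = 0 := by
      rw [Matrix.vecMul_sub, Pi.sub_def, Finset.sum_sub_distrib,
        my_sum_vecMul_pow_zero hT hπ hv t, my_sum_vecMul_pow_zero hT hπ' hv t, sub_zero]
    have term2 : l1 ((v ᵥ* (Pmat T π ^ t - Pmat T π' ^ t)) ᵥ* Pmat T π') ≤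
        Real.exp (-(1 / τ)) * ((t : ℝ) * D * Real.exp (-((t : ℝ) - 1) / τ) * l1 v) := by
      refine (my_contraction hmix hπ' _ hsumdiff).trans ?_
      exact mul_le_mul_of_nonneg_left ih (Real.exp_pos _).le
    have hexp : Real.exp (-(1 / τ)) * Real.exp (-((t : ℝ) - 1) / τ) =
        Real.exp (-(t : ℝ) / τ) := by
      rw [← Real.exp_add]
      congr 1
      field_simp
      ring
    calc l1 ((v ᵥ* Pmat T π ^ t) ᵥ* (Pmat T π - Pmat T π') +
            (v ᵥ* (Pmat T π ^ t - Pmat T π' ^ t)) ᵥ* Pmat T π')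
        ≤ l1 ((v ᵥ* Pmat T π ^ t) ᵥ* (Pmat T π - Pmat T π')) +
            l1 ((v ᵥ* (Pmat T π ^ t - Pmat T π' ^ t)) ᵥ* Pmat T π') := my_l1_add_le _ _
      _ ≤ D * (Real.exp (-(t : ℝ) / τ) * l1 v) +
            Real.exp (-(1 / τ)) * ((t : ℝ) * D * Real.exp (-((t : ℝ) - 1) / τ) * l1 v) :=
          add_le_add term1 term2
      _ = ((t : ℝ) + 1) * D * Real.exp (-(t : ℝ) / τ) * l1 v := by
          rw [show Real.exp (-(1 / τ)) * ((t : ℝ) * D * Real.exp (-((t : ℝ) - 1) / τ) * l1 v)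
              = (t : ℝ) * D * (Real.exp (-(1 / τ)) * Real.exp (-((t : ℝ) - 1) / τ)) * l1 v by
            ring]
          rw [hexp]; ring
      _ = ((t + 1 : ℕ) : ℝ) * D * Real.exp (-(((t + 1 : ℕ) : ℝ) - 1) / τ) * l1 v := by
          push_cast; ring_nf

/-- Lipschitz bound for powers of the induced transition matrices. -/
theorem transition_pow_lipschitz
    (T : S → (∀ i, A i) → S → ℝ) (hT : IsTransition T)
    (τ : ℝ) (hτ : 0 < τ) (hmix : Mixing T τ)
    (π π' : ∀ i : Fin n, S → A i → ℝ)
    (hπ : IsPolicyProfile π) (hπ' : IsPolicyProfile π')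
    (w w' : S → ℝ) (hw : IsDist w) (hw' : IsDist w')
    (t : ℕ) (ht : 1 ≤ t) :
    l1 ((w - w') ᵥ* (Pmat T π ^ t - Pmat T π' ^ t)) ≤
      ((2 : ℝ) ^ n - 1) * (Fintype.card (∀ i, A i) : ℝ) * (Fintype.card S : ℝ) * (t : ℝ) * Real.exp (-((t : ℝ) - 1) / τ) *
        polDist π π' * l1 (w - w') := by
  have hv : ∑ s, (w - w') s = 0 := by
    simp only [Pi.sub_apply]
    rw [Finset.sum_sub_distrib, hw.2, hw'.2, sub_self]
  have h := my_key hT hτ hmix hπ hπ' (w - w') hv t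
  calc l1 ((w - w') ᵥ* (Pmat T π ^ t - Pmat T π' ^ t))
      ≤ (t : ℝ) * (((2 : ℝ) ^ n - 1) * (Fintype.card (∀ i, A i) : ℝ) * (Fintype.card S : ℝ) *
        polDist π π') * Real.exp (-((t : ℝ) - 1) / τ) * l1 (w - w') := h
    _ = ((2 : ℝ) ^ n - 1) * (Fintype.card (∀ i, A i) : ℝ) * (Fintype.card S : ℝ) * (t : ℝ) *
        Real.exp (-((t : ℝ) - 1) / τ) * polDist π π' * l1 (w - w') := by ring


end
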